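/- arXiv:0710.0651 — 3 statements merged into one kernel-verified Lean document; each statement's English description precedes it below -/
import Mathlib

section
/- Let N be an odd positive integer. The N² phase space operators A(p,q), for (p,q) ∈ (ZMod N)², form an orthogonal family normalized so that (1/N)·tr(A(v)·A(w)) = δ_{v,w} for all v, w ∈ (ZMod N)²; in particular they form an orthogonal basis of the N×N complex matrices with respect to the Hilbert–Schmidt inner product. -/
open Matrix BigOperators

noncomputable section

/-- `ω = exp(2πi/N)`, a primitive `N`-th root of unity. -/
def omegaN (N : ℕ) : ℂ := Complex.exp (2 * Real.pi * Complex.I / N)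

section AuxLemmas

set_option linter.unusedSectionVars false

variable (N : ℕ) [NeZero N]

lemma omegaN_pow_N : omegaN N ^ N = 1 := by
  have h : (N : ℂ) ≠ 0 := Nat.cast_ne_zero.mpr (NeZero.ne N)
  rw [omegaN, ← Complex.exp_nat_mul, mul_div_cancel₀ _ h, Complex.exp_two_pi_mul_I]

lemma omegaN_pow_mod (m : ℕ) : omegaN N ^ m = omegaN N ^ (m % N) := by
  conv_lhs => rw [← Nat.mod_add_div m N, pow_add, pow_mul, omegaN_pow_N, one_pow, mul_one]

def eN (a : ZMod N) : ℂ := omegaN N ^ a.val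

lemma eN_add (a b : ZMod N) : eN N (a + b) = eN N a * eN N b := by
  rw [eN, eN, eN, ← pow_add, ZMod.val_add, ← omegaN_pow_mod]

lemma eN_zero : eN N 0 = 1 := by simp [eN]

lemma eN_mul_neg (a : ZMod N) : eN N a * eN N (-a) = 1 := by
  rw [← eN_add]; simp [eN_zero]

lemma eN_ne_zero (a : ZMod N) : eN N a ≠ 0 := by
  intro h
  have := eN_mul_neg N a
  rw [h, zero_mul] at this
  exact one_ne_zero this.symm

lemma eN_neg (a : ZMod N) : eN N (-a) = (eN N a)⁻¹ :=
  eq_inv_of_mul_eq_one_left (by rw [mul_comm]; exact eN_mul_neg N a)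

lemma star_eN (a : ZMod N) : star (eN N a) = eN N (-a) := by
  rw [eN_neg]
  show star (omegaN N ^ a.val) = (omegaN N ^ a.val)⁻¹
  rw [← inv_pow, star_pow]
  congr 1
  rw [omegaN]
  rw [show (star (Complex.exp (2 * Real.pi * Complex.I / N)) : ℂ) = (starRingEnd ℂ) (Complex.exp (2 * Real.pi * Complex.I / N)) from rfl]
  rw [← Complex.exp_conj, ← Complex.exp_neg]
  congr 1
  rw [map_div₀]
  simp only [_root_.map_mul, Complex.conj_I, Complex.conj_ofReal, map_ofNat, Complex.conj_natCast]
  ring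

end AuxLemmas

/-- The shift operator `x(q)|k⟩ = |k+q⟩`. -/
def shiftOp (N : ℕ) [NeZero N] (q : ZMod N) : Matrix (ZMod N) (ZMod N) ℂ :=
  Matrix.of fun k l => if k = l + q then 1 else 0

/-- The boost operator `z(p)|k⟩ = ω^{pk}|k⟩`. -/
def boostOp (N : ℕ) [NeZero N] (p : ZMod N) : Matrix (ZMod N) (ZMod N) ℂ :=
  Matrix.diagonal fun k => omegaN N ^ (p * k).val

/-- The Weyl operator `w(p,q) = ω^{−2⁻¹pq} z(p) x(q)`. -/
def weylOp (N : ℕ) [NeZero N] (p q : ZMod N) : Matrix (ZMod N) (ZMod N) ℂ :=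
  omegaN N ^ ((-(2⁻¹ : ZMod N) * p * q).val) • (boostOp N p * shiftOp N q)

/-- The parity operator `A(0,0)|x⟩ = |−x⟩`. -/
def parityOp (N : ℕ) [NeZero N] : Matrix (ZMod N) (ZMod N) ℂ :=
  Matrix.of fun k l => if k = -l then 1 else 0

/-- The phase space operators `A(p,q) = w(p,q) A(0,0) w(p,q)†`. -/
def phaseOp (N : ℕ) [NeZero N] (a : ZMod N × ZMod N) : Matrix (ZMod N) (ZMod N) ℂ :=
  weylOp N a.1 a.2 * parityOp N * (weylOp N a.1 a.2)ᴴ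

section AuxLemmas2

set_option linter.unusedSectionVars false

variable (N : ℕ) [NeZero N]

lemma weylOp_apply (p q k l : ZMod N) :
    weylOp N p q k l = eN N (-(2⁻¹ : ZMod N) * p * q) * eN N (p * k) * (if k = l + q then 1 else 0) := by
  simp [weylOp, boostOp, shiftOp, Matrix.smul_apply, Matrix.diagonal_mul, eN, mul_assoc]

lemma phaseOp_apply (p q k l : ZMod N) :
    phaseOp N (p, q) k l = if k + l = 2 * q then eN N (p * (k - l)) else 0 := by
  have hWP : ∀ m : ZMod N, (weylOp N p q * parityOp N) k m = weylOp N p q k (-m) := by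
    intro m
    rw [Matrix.mul_apply]
    simp only [parityOp, Matrix.of_apply, mul_ite, mul_one, mul_zero]
    rw [Finset.sum_ite_eq' Finset.univ (-m) (fun j => weylOp N p q k j)]
    simp
  rw [phaseOp]
  rw [Matrix.mul_apply]
  simp only [hWP, Matrix.conjTranspose_apply, weylOp_apply]
  rw [Finset.sum_eq_single (q - k)]
  · have h1 : (k = -(q - k) + q) := by ring
    have h2 : (l = q - k + q) ↔ (k + l = 2 * q) :=
      ⟨fun h => by rw [h]; ring, fun h => by linear_combination h⟩
    simp only [if_pos h1, mul_one]
    by_cases h : k + l = 2 * q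
    · rw [if_pos (h2.mpr h), if_pos h, mul_one, StarMul.star_mul, star_eN, star_eN]
      rw [show eN N (-2⁻¹ * p * q) * eN N (p * k) * (eN N (-(p*l)) * eN N (-(-2⁻¹ * p * q)))
          = eN N (-2⁻¹ * p * q) * eN N (-(-2⁻¹ * p * q)) * (eN N (p * k) * eN N (-(p*l))) by ring]
      rw [eN_mul_neg, one_mul]
      rw [← eN_add]
      congr 1
      ring
    · rw [if_neg (fun hc => h (h2.mp hc)), if_neg h, mul_zero, star_zero, mul_zero]
  · intro m _ hm
    have : ¬ (k = -m + q) := fun hk => hm (by rw [hk]; ring)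
    simp [this]
  · intro h
    exact absurd (Finset.mem_univ _) h

lemma sum_eN_eq (a : ZMod N) : (∑ k : ZMod N, eN N (a * k)) = if a = 0 then (N : ℂ) else 0 := by
  by_cases ha : a = 0
  · simp [ha, eN_zero]
  · rw [if_neg ha]
    have hval : ∀ k : ZMod N, eN N (a * k) = (omegaN N ^ a.val) ^ k.val := by
      intro k
      rw [eN, ← pow_mul, ZMod.val_mul, ← omegaN_pow_mod]
    simp only [hval]
    set ζ := omegaN N ^ a.val with hζ
    have hsum : (∑ k : ZMod N, ζ ^ k.val) = ∑ i ∈ Finset.range N, ζ ^ i := by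
      refine Finset.sum_nbij' (fun k => k.val) (fun i => (i : ZMod N)) ?_ ?_ ?_ ?_ ?_
      · intro k _; exact Finset.mem_range.mpr (ZMod.val_lt k)
      · intro i _; exact Finset.mem_univ _
      · intro k _; exact ZMod.natCast_zmod_val k
      · intro i hi; exact ZMod.val_natCast_of_lt (Finset.mem_range.mp hi)
      · intro k _; rfl
    rw [hsum]
    have hprim : IsPrimitiveRoot (omegaN N) N := Complex.isPrimitiveRoot_exp N (NeZero.ne N)
    have hne1 : ζ ≠ 1 := by
      apply hprim.pow_ne_one_of_pos_of_lt
      · exact (fun h => ha ((ZMod.val_eq_zero a).mp h))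
      · exact ZMod.val_lt a
    rw [geom_sum_eq hne1]
    have : ζ ^ N = 1 := by rw [hζ, ← pow_mul, mul_comm, pow_mul, omegaN_pow_N, one_pow]
    rw [this, sub_self, zero_div]

lemma trace_phaseOp_mul (h2 : IsUnit (2 : ZMod N)) (p q p' q' : ZMod N) :
    (phaseOp N (p, q) * phaseOp N (p', q')).trace
      = if p = p' ∧ q = q' then (N : ℂ) else 0 := by
  have hcan : ∀ a b : ZMod N, 2 * a = 2 * b → a = b := fun a b h => h2.mul_left_cancel h
  rw [Matrix.trace]
  simp only [Matrix.diag_apply, Matrix.mul_apply, phaseOp_apply]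
  by_cases hq : q = q'
  · subst hq
    have hinner : ∀ i : ZMod N,
        (∑ j : ZMod N, (if i + j = 2*q then eN N (p*(i-j)) else 0)
          * (if j + i = 2*q then eN N (p'*(j-i)) else 0))
        = eN N ((p - p') * (2*i - 2*q)) := by
      intro i
      rw [Finset.sum_eq_single (2*q - i)]
      · have c1 : i + (2*q - i) = 2*q := by ring
        have c2 : (2*q - i) + i = 2*q := by ring
        rw [if_pos c1, if_pos c2, ← eN_add]
        congr 1; ring
      · intro j _ hj
        by_cases h1 : i + j = 2*q
        · exact absurd (by linear_combination h1) hj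
        · rw [if_neg h1, zero_mul]
      · intro h; exact absurd (Finset.mem_univ _) h
    simp only [hinner]
    have hsplit : ∀ i : ZMod N, eN N ((p - p') * (2*i - 2*q))
        = eN N ((2*(p - p'))*i) * eN N (-((2*(p - p'))*q)) := by
      intro i; rw [← eN_add]; congr 1; ring
    simp only [hsplit]
    rw [← Finset.sum_mul, sum_eN_eq]
    by_cases hp : p = p'
    · subst hp
      simp [eN_zero]
    · have hne : ¬ (2*(p - p') = 0) := by
        intro hc
        exact hp (by linear_combination hcan (p - p') 0 (by linear_combination hc))
      rw [if_neg hne, zero_mul, if_neg (fun h => hp h.1)]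
  · rw [if_neg (fun h => hq h.2)]
    apply Finset.sum_eq_zero; intro i _
    apply Finset.sum_eq_zero; intro j _
    by_cases h1 : i + j = 2*q
    · have : ¬(j + i = 2*q') := fun hc => hq (hcan q q' (by linear_combination hc - h1))
      rw [if_neg this, mul_zero]
    · rw [if_neg h1, zero_mul]

end AuxLemmas2

/-- for odd `N`, the `N²` phase space operators satisfy
`(1/N)·tr(A(v)·A(w)) = δ_{v,w}`; in particular they are linearly independent and
span the space of `N × N` complex matrices, i.e. they form an orthogonal basis
with respect to the Hilbert–Schmidt inner product. -/
theorem phaseOp_orthogonal_basis (N : ℕ) [NeZero N] (hN : Odd N) :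
    (∀ v w : ZMod N × ZMod N,
        (1 / (N : ℂ)) * (phaseOp N v * phaseOp N w).trace = if v = w then 1 else 0)
    ∧ LinearIndependent ℂ (phaseOp N)
    ∧ Submodule.span ℂ (Set.range (phaseOp N)) = ⊤ := by
  have hNc : (N : ℂ) ≠ 0 := Nat.cast_ne_zero.mpr (NeZero.ne N)
  have h2 : IsUnit (2 : ZMod N) := by
    have : IsUnit ((2 : ℕ) : ZMod N) := (ZMod.isUnit_iff_coprime 2 N).mpr
      (Nat.coprime_two_left.mpr hN)
    simpa using this
  have htr : ∀ v w : ZMod N × ZMod N,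
      (phaseOp N v * phaseOp N w).trace = if v = w then (N : ℂ) else 0 := by
    rintro ⟨p, q⟩ ⟨p', q'⟩
    rw [trace_phaseOp_mul N h2]
    simp only [Prod.mk.injEq]
  have hortho : ∀ v w : ZMod N × ZMod N,
      (1 / (N : ℂ)) * (phaseOp N v * phaseOp N w).trace = if v = w then 1 else 0 := by
    intro v w
    rw [htr]
    split
    · rw [one_div, inv_mul_cancel₀ hNc]
    · rw [mul_zero]
  have hli : LinearIndependent ℂ (phaseOp N) := by
    rw [Fintype.linearIndependent_iff]
    intro g hg w
    have := congrArg (fun M => (M * phaseOp N w).trace) hg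
    simp only [Matrix.sum_mul, Matrix.trace_sum, Matrix.smul_mul, Matrix.trace_smul,
      Matrix.zero_mul, Matrix.trace_zero, smul_eq_mul] at this
    simp only [htr] at this
    rw [Finset.sum_eq_single w] at this
    · rw [if_pos rfl] at this
      exact (mul_eq_zero.mp this).resolve_right hNc
    · intro v _ hv; rw [if_neg hv, mul_zero]
    · intro h; exact absurd (Finset.mem_univ _) h
  refine ⟨hortho, hli, ?_⟩
  apply hli.span_eq_top_of_card_eq_finrank
  rw [Module.finrank_matrix]
  simp [ZMod.card]
end
end

section
/- Let N be an odd positive integer. For all N×N complex matrices X and Y, tr(X†·Y) = N · Σ_{v ∈ (ZMod N)²} conj(W_X(v)) · W_Y(v), where W_X(v) = (1/N)·tr(A(v)·X) is the discrete Wigner function of X. In particular the map X ↦ W_X is (up to the factor √N) an isometry from the Hilbert–Schmidt inner product to ℓ² of the discrete phase space. -/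
open Matrix BigOperators

noncomputable section

/-- The discrete Wigner function `W_X(v) = (1/N)·tr(A(v)·X)`. -/
def wigner (N : ℕ) [NeZero N] (X : Matrix (ZMod N) (ZMod N) ℂ) (v : ZMod N × ZMod N) : ℂ :=
  (1 / (N : ℂ)) * (phaseOp N v * X).trace

set_option linter.unusedSectionVars false

namespace WAux


variable (N : ℕ) [NeZero N]

/-- The additive character `a ↦ ω^{a.val}`. -/
def χ (a : ZMod N) : ℂ := omegaN N ^ a.val

lemma hprim : IsPrimitiveRoot (omegaN N) N := Complex.isPrimitiveRoot_exp N (NeZero.ne N)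

lemma omega_pow_N : omegaN N ^ N = 1 := (hprim N).pow_eq_one

lemma pow_val_mod (m : ℕ) : omegaN N ^ (m % N) = omegaN N ^ m := by
  conv_rhs => rw [← Nat.mod_add_div m N]
  rw [pow_add, pow_mul, omega_pow_N, one_pow, mul_one]

lemma χ_add (a b : ZMod N) : χ N (a + b) = χ N a * χ N b := by
  rw [χ, χ, χ, ← pow_add, ZMod.val_add, pow_val_mod]

lemma χ_zero : χ N 0 = 1 := by simp [χ]

lemma χ_mul_neg (a : ZMod N) : χ N a * χ N (-a) = 1 := by
  rw [← χ_add]; simp [χ_zero]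

lemma conj_χ (a : ZMod N) : (starRingEnd ℂ) (χ N a) = χ N (-a) := by
  have hc : (starRingEnd ℂ) (omegaN N) = (omegaN N)⁻¹ := by
    rw [omegaN, ← Complex.exp_conj, ← Complex.exp_neg]
    congr 1
    simp [Complex.ext_iff, neg_div]
  calc (starRingEnd ℂ) (χ N a) = (omegaN N ^ a.val)⁻¹ := by rw [χ, map_pow, hc, inv_pow]
  _ = χ N (-a) := inv_eq_of_mul_eq_one_right (χ_mul_neg N a)

lemma χ_ne_one {t : ZMod N} (ht : t ≠ 0) : χ N t ≠ 1 := by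
  have h1 : 0 < t.val := Nat.pos_of_ne_zero fun h => ht ((ZMod.val_eq_zero t).mp h)
  exact (hprim N).pow_ne_one_of_pos_of_lt h1.ne' (ZMod.val_lt t)

lemma sum_χ (t : ZMod N) : ∑ p : ZMod N, χ N (p * t) = if t = 0 then (N : ℂ) else 0 := by
  split_ifs with h
  · subst h; simp [χ_zero, Finset.card_univ]
  · have key : χ N t * ∑ p : ZMod N, χ N (p * t) = ∑ p : ZMod N, χ N (p * t) := by
      rw [Finset.mul_sum]
      refine Fintype.sum_equiv (Equiv.addRight 1) _ _ fun p => ?_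
      simp only [Equiv.coe_addRight]
      rw [← χ_add]
      congr 1
      ring
    have h2 : (χ N t - 1) * ∑ p : ZMod N, χ N (p * t) = 0 := by
      rw [sub_mul, one_mul, key, sub_self]
    rcases mul_eq_zero.mp h2 with h' | h'
    · exact absurd (sub_eq_zero.mp h') (χ_ne_one N h)
    · exact h'

lemma weyl_apply (p q i j : ZMod N) :
    weylOp N p q i j = if i = j + q then χ N (-(2⁻¹ : ZMod N) * p * q) * χ N (p * i) else 0 := by
  simp only [weylOp, Matrix.smul_apply, Matrix.mul_apply, boostOp, shiftOp, Matrix.diagonal,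
    Matrix.of_apply, smul_eq_mul]
  rw [Finset.sum_eq_single i]
  · simp only [if_pos rfl, χ, mul_ite, mul_one, mul_zero, ite_mul, zero_mul, if_true]
  · intro b _ hb
    simp [if_neg (Ne.symm hb)]
  · simp

lemma phase_apply (p q i j : ZMod N) :
    phaseOp N (p, q) i j = if i + j = q + q then χ N (p * (i - j)) else 0 := by
  have hWP : ∀ n : ZMod N, (weylOp N p q * parityOp N) i n = weylOp N p q i (-n) := by
    intro n
    rw [Matrix.mul_apply, Finset.sum_eq_single (-n)]
    · simp [parityOp]
    · intro b _ hb; simp [parityOp, if_neg (show b ≠ -n from hb)]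
    · simp
  show (weylOp N p q * parityOp N * (weylOp N p q)ᴴ) i j = _
  rw [Matrix.mul_apply]
  simp only [Matrix.conjTranspose_apply, hWP]
  rw [Finset.sum_eq_single (q - i)]
  · rw [weyl_apply, weyl_apply]
    have hcond1 : i = -(q - i) + q := by ring
    rw [if_pos hcond1]
    have hcond2 : (j = q - i + q) ↔ (i + j = q + q) := by
      constructor <;> intro h
      · rw [h]; ring
      · have : j = i + j - i := by ring
        rw [this, h]; ring
    by_cases hc : i + j = q + q
    · rw [if_pos (hcond2.mpr hc), if_pos hc, star_mul']
      have : ∀ z w : ℂ, star z = (starRingEnd ℂ) z := fun z w => rfl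
      rw [show (star (χ N (-(2⁻¹:ZMod N) * p * q)) : ℂ) = χ N (-(-(2⁻¹:ZMod N) * p * q)) from conj_χ N _,
        show (star (χ N (p * j)) : ℂ) = χ N (-(p * j)) from conj_χ N _]
      calc χ N (-(2⁻¹:ZMod N) * p * q) * χ N (p * i) * (χ N (-(-(2⁻¹:ZMod N) * p * q)) * χ N (-(p * j)))
          = (χ N (-(2⁻¹:ZMod N) * p * q) * χ N (-(-(2⁻¹:ZMod N) * p * q))) * (χ N (p * i) * χ N (-(p * j))) := by ring
        _ = χ N (p * i) * χ N (-(p * j)) := by rw [χ_mul_neg, one_mul]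
        _ = χ N (p * i + -(p * j)) := (χ_add N _ _).symm
        _ = χ N (p * (i - j)) := by congr 1; ring
    · rw [if_neg (fun h => hc (hcond2.mp h)), if_neg hc, star_zero, mul_zero]
  · intro b _ hb
    rw [weyl_apply, if_neg fun h => hb (by rw [show b = q - i from by rw [h]; ring]), zero_mul]
  · simp

end WAux

section Main
variable (N : ℕ) [NeZero N]

lemma add_self_cancel (h2' : (2⁻¹ : ZMod N) * 2 = 1) {a b : ZMod N} (h : a + a = b + b) : a = b := by
  calc a = 2⁻¹ * 2 * a := by rw [h2', one_mul]
  _ = 2⁻¹ * (a + a) := by ring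
  _ = 2⁻¹ * (b + b) := by rw [h]
  _ = 2⁻¹ * 2 * b := by ring
  _ = b := by rw [h2', one_mul]

lemma sum_phase (hN : Odd N) (i j k l : ZMod N) :
    ∑ v : ZMod N × ZMod N, phaseOp N v i j * phaseOp N v k l
      = if i = l ∧ j = k then (N : ℂ) else 0 := by
  have h2 : (2 : ZMod N) * 2⁻¹ = 1 := by
    apply ZMod.mul_inv_of_unit
    have : IsUnit ((2 : ℕ) : ZMod N) := (ZMod.isUnit_iff_coprime 2 N).mpr hN.coprime_two_left
    simpa using this
  have h2' : (2⁻¹ : ZMod N) * 2 = 1 := by rw [mul_comm]; exact h2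
  have hq : ∀ s q : ZMod N, (s = q + q) ↔ (q = 2⁻¹ * s) := by
    intro s q
    constructor <;> intro h
    · calc q = 2⁻¹ * 2 * q := by rw [h2', one_mul]
      _ = 2⁻¹ * (q + q) := by ring
      _ = 2⁻¹ * s := by rw [h]
    · calc s = 2 * 2⁻¹ * s := by rw [h2, one_mul]
      _ = 2⁻¹ * s + 2⁻¹ * s := by ring
      _ = q + q := by rw [← h]
  rw [Fintype.sum_prod_type]
  simp only [WAux.phase_apply, hq, ite_mul, zero_mul, mul_ite, mul_zero]
  have hcol : ∀ p : ZMod N,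
      (∑ q : ZMod N, if q = 2⁻¹ * (k + l) then
        (if q = 2⁻¹ * (i + j) then WAux.χ N (p * (i - j)) * WAux.χ N (p * (k - l)) else 0) else 0)
      = if 2⁻¹ * (i + j) = 2⁻¹ * (k + l) then WAux.χ N (p * (i - j)) * WAux.χ N (p * (k - l)) else 0 := by
    intro p
    rw [Finset.sum_ite_eq' Finset.univ (2⁻¹ * (k + l))
      (fun q => if q = 2⁻¹ * (i + j) then WAux.χ N (p * (i - j)) * WAux.χ N (p * (k - l)) else 0)]
    simp only [Finset.mem_univ, if_true]
    congr 1
    simp only [eq_iff_iff, eq_comm]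
  rw [Finset.sum_congr rfl fun p _ => hcol p]
  by_cases hcc : (2⁻¹ : ZMod N) * (i + j) = 2⁻¹ * (k + l)
  · simp only [if_pos hcc]
    have hsum : i + j = k + l := by
      calc i + j = 2 * (2⁻¹ * (i + j)) := by rw [← mul_assoc, h2, one_mul]
      _ = 2 * (2⁻¹ * (k + l)) := by rw [hcc]
      _ = k + l := by rw [← mul_assoc, h2, one_mul]
    have hrw : ∀ p : ZMod N, WAux.χ N (p * (i - j)) * WAux.χ N (p * (k - l))
        = WAux.χ N (p * ((i - j) + (k - l))) := by
      intro p; rw [← WAux.χ_add]; congr 1; ring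
    rw [Finset.sum_congr rfl fun p _ => hrw p, WAux.sum_χ]
    congr 1
    · simp only [eq_iff_iff]
      constructor
      · intro ht
        have hij : i - j = l - k := by
          have : (i - j) + (k - l) + (l - k) = 0 + (l - k) := by rw [ht]
          calc i - j = (i - j) + (k - l) + (l - k) := by ring
          _ = 0 + (l - k) := this
          _ = l - k := by ring
        have hi : i + i = l + l := by
          calc i + i = (i + j) + (i - j) := by ring
          _ = (k + l) + (l - k) := by rw [hsum, hij]
          _ = l + l := by ring
        have hil : i = l := add_self_cancel N h2' hi
        refine ⟨hil, ?_⟩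
        have : j + j = k + k := by
          calc j + j = (i + j) - (i - j) := by ring
          _ = (k + l) - (l - k) := by rw [hsum, hij]
          _ = k + k := by ring
        exact add_self_cancel N h2' this
      · rintro ⟨rfl, rfl⟩; ring
  · simp only [if_neg hcc, Finset.sum_const_zero]
    rw [if_neg]
    rintro ⟨rfl, rfl⟩
    exact hcc (by rw [add_comm])

lemma phase_herm (v : ZMod N × ZMod N) : (phaseOp N v)ᴴ = phaseOp N v := by
  obtain ⟨p, q⟩ := v
  ext i j
  rw [Matrix.conjTranspose_apply, WAux.phase_apply, WAux.phase_apply, add_comm j i]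
  split_ifs with h
  · rw [show (star (WAux.χ N (p * (j - i))) : ℂ) = WAux.χ N (-(p * (j - i))) from WAux.conj_χ N _]
    congr 1; ring
  · exact star_zero ℂ

lemma htrace (A M : Matrix (ZMod N) (ZMod N) ℂ) :
    (A * M).trace = ∑ x : ZMod N × ZMod N, A x.1 x.2 * M x.2 x.1 := by
  rw [Fintype.sum_prod_type]
  simp [Matrix.trace, Matrix.diag, Matrix.mul_apply]

end Main


lemma conj_wigner (N : ℕ) [NeZero N] (X : Matrix (ZMod N) (ZMod N) ℂ) (v : ZMod N × ZMod N) :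
    (starRingEnd ℂ) (wigner N X v) = (1 / (N : ℂ)) * (phaseOp N v * Xᴴ).trace := by
  rw [wigner, _root_.map_mul]
  congr 1
  · simp
  · calc (starRingEnd ℂ) ((phaseOp N v * X).trace)
        = ((phaseOp N v * X)ᴴ).trace := (Matrix.trace_conjTranspose _).symm
      _ = (Xᴴ * (phaseOp N v)ᴴ).trace := by rw [Matrix.conjTranspose_mul]
      _ = (Xᴴ * phaseOp N v).trace := by rw [phase_herm]
      _ = (phaseOp N v * Xᴴ).trace := Matrix.trace_mul_comm _ _


/-- for odd `N`, the Hilbert–Schmidt inner product of two matrices equals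
`N` times the `ℓ²` inner product of their Wigner functions:
`tr(X†·Y) = N · Σ_v conj(W_X(v)) · W_Y(v)`. -/
theorem wigner_isometry (N : ℕ) [NeZero N] (hN : Odd N)
    (X Y : Matrix (ZMod N) (ZMod N) ℂ) :
    (Xᴴ * Y).trace
      = (N : ℂ) * ∑ v : ZMod N × ZMod N, (starRingEnd ℂ) (wigner N X v) * wigner N Y v := by
  have hNC : (N : ℂ) ≠ 0 := Nat.cast_ne_zero.mpr (NeZero.ne N)
  have step1 : ∀ v : ZMod N × ZMod N, (starRingEnd ℂ) (wigner N X v) * wigner N Y v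
      = (1 / (N : ℂ))^2 * ((phaseOp N v * Xᴴ).trace * (phaseOp N v * Y).trace) := by
    intro v; rw [conj_wigner, wigner]; ring
  have step2 : ∑ v : ZMod N × ZMod N, (phaseOp N v * Xᴴ).trace * (phaseOp N v * Y).trace
      = (N : ℂ) * (Xᴴ * Y).trace := by
    have expand : ∀ v : ZMod N × ZMod N,
        (phaseOp N v * Xᴴ).trace * (phaseOp N v * Y).trace
        = ∑ x : ZMod N × ZMod N, ∑ y : ZMod N × ZMod N,
            (phaseOp N v x.1 x.2 * Xᴴ x.2 x.1) * (phaseOp N v y.1 y.2 * Y y.2 y.1) := by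
      intro v
      rw [htrace, htrace, Finset.sum_mul_sum]
    rw [Finset.sum_congr rfl fun v _ => expand v]
    rw [Finset.sum_comm]
    have inner : ∀ x : ZMod N × ZMod N,
        (∑ v : ZMod N × ZMod N, ∑ y : ZMod N × ZMod N,
          (phaseOp N v x.1 x.2 * Xᴴ x.2 x.1) * (phaseOp N v y.1 y.2 * Y y.2 y.1))
        = (N : ℂ) * (Xᴴ x.2 x.1 * Y x.1 x.2) := by
      intro x
      rw [Finset.sum_comm]
      have hy : ∀ y : ZMod N × ZMod N,
          (∑ v : ZMod N × ZMod N, (phaseOp N v x.1 x.2 * Xᴴ x.2 x.1) * (phaseOp N v y.1 y.2 * Y y.2 y.1))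
          = (if x.1 = y.2 ∧ x.2 = y.1 then (N : ℂ) else 0) * (Xᴴ x.2 x.1 * Y y.2 y.1) := by
        intro y
        calc (∑ v : ZMod N × ZMod N, (phaseOp N v x.1 x.2 * Xᴴ x.2 x.1) * (phaseOp N v y.1 y.2 * Y y.2 y.1))
            = (∑ v : ZMod N × ZMod N, phaseOp N v x.1 x.2 * phaseOp N v y.1 y.2) * (Xᴴ x.2 x.1 * Y y.2 y.1) := by
              rw [Finset.sum_mul]; exact Finset.sum_congr rfl fun v _ => by ring
          _ = _ := by rw [sum_phase N hN]
      rw [Finset.sum_congr rfl fun y _ => hy y]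
      have hcond : ∀ y : ZMod N × ZMod N, (x.1 = y.2 ∧ x.2 = y.1) ↔ y = (x.2, x.1) := by
        intro y
        rw [Prod.ext_iff]
        constructor
        · rintro ⟨h1, h2⟩; exact ⟨h2.symm, h1.symm⟩
        · rintro ⟨h1, h2⟩; exact ⟨h2.symm, h1.symm⟩
      simp only [hcond, ite_mul, zero_mul]
      rw [Finset.sum_ite_eq' Finset.univ ((x.2, x.1) : ZMod N × ZMod N)
        (fun y => (N : ℂ) * (Xᴴ x.2 x.1 * Y y.2 y.1))]
      simp
    rw [Finset.sum_congr rfl fun x _ => inner x, ← Finset.mul_sum]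
    congr 1
    rw [htrace]
    exact Fintype.sum_equiv (Equiv.prodComm _ _) _ _ fun x => by simp [Equiv.prodComm]
  rw [Finset.sum_congr rfl fun v _ => step1 v, ← Finset.mul_sum, step2]
  field_simp
end
end

section
/- Let N be an odd positive integer and λ ≥ 0. Suppose unitaries U_T on ℂ^N satisfy U_T·A(v)·U_T† = A(T(v)) for all v ∈ (ZMod N)² and all T in the Margulis set 𝒮, and let Λ_N(ρ) = (1/8)·Σ_{T∈𝒮} U_T·ρ·U_T†. If the classical Margulis walk operator M_N satisfies ‖M_N f‖₂ ≤ λ·‖f‖₂ for every function f : (ZMod N)² → ℂ with Σ_v f(v) = 0, then for every N×N complex matrix X with tr(X) = 0 one has ‖Λ_N(X)‖_HS ≤ λ·‖X‖_HS, where ‖·‖_HS denotes the Hilbert–Schmidt (Frobenius) norm. In other words, Λ_N is an (N, 8, λ)-quantum expander. -/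
open Matrix BigOperators

noncomputable section

/-- The eight Margulis transformations, over any commutative ring.
Indices 0–3 are `T₁(v) = S₁v`, `T₂(v) = S₁v + (1,0)ᵀ`, `T₃(v) = S₂v`,
`T₄(v) = S₂v − (0,1)ᵀ` with `S₁ = [[1,2],[0,1]]`, `S₂ = [[1,0],[2,1]]`;
indices 4–7 are their respective inverses. -/
def marg {R : Type*} [CommRing R] : Fin 8 → R × R → R × R
  | 0 => fun v => (v.1 + 2 * v.2, v.2)
  | 1 => fun v => (v.1 + 2 * v.2 + 1, v.2)
  | 2 => fun v => (v.1, v.2 + 2 * v.1)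
  | 3 => fun v => (v.1, v.2 + 2 * v.1 - 1)
  | 4 => fun v => (v.1 - 2 * v.2, v.2)
  | 5 => fun v => (v.1 - 2 * v.2 - 1, v.2)
  | 6 => fun v => (v.1, v.2 - 2 * v.1)
  | 7 => fun v => (v.1, v.2 - 2 * v.1 + 1)

/-- The inverse of the `i`-th Margulis transformation (the family is closed under
inverses: `marg (i+4)` is the inverse of `marg i`). -/
def margInv {R : Type*} [CommRing R] (i : Fin 8) : R × R → R × R := marg (i + 4)

/-- The Hilbert–Schmidt (Frobenius) norm of a complex matrix. -/
def hsNorm {n : Type*} [Fintype n] (X : Matrix n n ℂ) : ℝ :=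
  Real.sqrt (∑ i, ∑ j, ‖X i j‖ ^ 2)


namespace QME
variable {N : ℕ} [NeZero N]

lemma omega_pow_N : omegaN N ^ N = 1 := by
  have hN : (N:ℂ) ≠ 0 := Nat.cast_ne_zero.mpr (NeZero.ne N)
  rw [omegaN, ← Complex.exp_nat_mul]
  rw [show (N:ℂ) * (2 * Real.pi * Complex.I / N) = 2 * Real.pi * Complex.I by field_simp]
  exact Complex.exp_two_pi_mul_I

/-- The additive character `e a = ω^{a.val}`. -/
def e (a : ZMod N) : ℂ := omegaN N ^ a.val

lemma e_eq_pow (a : ZMod N) : e a = (omegaN N) ^ a.val := rfl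

lemma e_add (a b : ZMod N) : e (a + b) = e a * e b := by
  rw [e, e, e, ZMod.val_add, ← pow_eq_pow_mod _ omega_pow_N, pow_add]

lemma e_zero : e (0 : ZMod N) = 1 := by simp [e]

lemma e_mul_val (a b : ZMod N) : e (a * b) = (e b) ^ a.val := by
  rw [e, e, ZMod.val_mul, ← pow_eq_pow_mod _ omega_pow_N, ← pow_mul, mul_comm a.val]

lemma e_ne_one {b : ZMod N} (hb : b ≠ 0) : e b ≠ 1 := by
  have hprim : IsPrimitiveRoot (omegaN N) N := Complex.isPrimitiveRoot_exp N (NeZero.ne N)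
  intro h
  have hd := (IsPrimitiveRoot.pow_eq_one_iff_dvd hprim b.val).mp h
  have h0 : b.val = 0 := Nat.eq_zero_of_dvd_of_lt hd (ZMod.val_lt b)
  exact hb ((ZMod.val_eq_zero b).mp h0)

lemma sum_pow_val (x : ℂ) : ∑ a : ZMod N, x ^ a.val = ∑ i ∈ Finset.range N, x ^ i := by
  apply Finset.sum_nbij' (fun (a : ZMod N) => a.val) (fun i => (i : ZMod N)) <;>
    simp (config := {contextual := true}) [ZMod.val_lt, ZMod.val_cast_of_lt,
      Finset.mem_range, Nat.mod_eq_of_lt]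

lemma sum_e_mul (b : ZMod N) : ∑ a : ZMod N, e (a * b) = if b = 0 then (N : ℂ) else 0 := by
  simp only [e_mul_val]
  rw [sum_pow_val]
  by_cases hb : b = 0
  · simp [hb, e_zero]
  · rw [if_neg hb, geom_sum_eq (e_ne_one hb)]
    have : (e b) ^ N = 1 := by
      rw [e_eq_pow, ← pow_mul, mul_comm, pow_mul, omega_pow_N, one_pow]
    rw [this]; simp

lemma abs_omega : ‖omegaN N‖ = 1 := by
  rw [omegaN, Complex.norm_exp]
  rw [show (2 * Real.pi * Complex.I / N) = ((2 * Real.pi / N : ℝ) : ℂ) * Complex.I by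
    push_cast; ring]
  simp

lemma star_e_mul_e (m : ZMod N) : star (e m) * e m = 1 := by
  have h : ‖e m‖ = 1 := by rw [e, norm_pow, abs_omega, one_pow]
  rw [Complex.star_def, mul_comm, Complex.mul_conj, Complex.normSq_eq_norm_sq, h]
  norm_num

lemma star_e (m : ZMod N) : star (e m) = e (-m) := by
  have h2 : e (-m) * e m = 1 := by rw [← e_add]; simp [e_zero]
  rw [eq_inv_of_mul_eq_one_left (star_e_mul_e m), eq_inv_of_mul_eq_one_left h2]

lemma BS_apply (p q : ZMod N) (k l : ZMod N) :
    (boostOp N p * shiftOp N q) k l = if k = l + q then e (p * k) else 0 := by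
  simp [boostOp, shiftOp, Matrix.diagonal_mul, e, mul_ite]

lemma phaseOp_eq (a : ZMod N × ZMod N) :
    phaseOp N a = (boostOp N a.1 * shiftOp N a.2) * parityOp N *
      (boostOp N a.1 * shiftOp N a.2)ᴴ := by
  rw [phaseOp, weylOp,
    show omegaN N ^ ((-(2⁻¹ : ZMod N) * a.1 * a.2).val) = e (-(2⁻¹ : ZMod N) * a.1 * a.2) from rfl]
  simp only [Matrix.conjTranspose_smul, Matrix.smul_mul, Matrix.mul_smul, smul_smul]
  rw [star_e_mul_e, one_smul]

lemma phaseOp_apply (a : ZMod N × ZMod N) (k n : ZMod N) :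
    phaseOp N a k n = if n + k = a.2 + a.2 then e (a.1 * k - a.1 * n) else 0 := by
  obtain ⟨p, q⟩ := a
  rw [phaseOp_eq, Matrix.mul_apply]
  have h1 : ∀ m, ((boostOp N p * shiftOp N q) * parityOp N) k m
      = if k = -m + q then e (p * k) else 0 := by
    intro m
    rw [Matrix.mul_apply]
    simp only [parityOp, Matrix.of_apply, mul_ite, mul_one, mul_zero, BS_apply]
    rw [Finset.sum_eq_single (-m)] <;> simp_all
  simp only [h1, conjTranspose_apply, BS_apply, ite_mul, zero_mul]
  rw [Finset.sum_eq_single (q - k)]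
  · rw [if_pos (by ring)]
    by_cases h : n + k = q + q
    · rw [if_pos (show n = q - k + q by linear_combination h), if_pos h]
      rw [star_e, ← e_add]
      congr 1; ring
    · rw [if_neg (show ¬ (n = q - k + q) from fun hc => h (by linear_combination hc)),
        star_zero, mul_zero, if_neg h]
  · intro b _ hb
    rw [if_neg (show ¬ (k = -b + q) from fun hc => hb (by linear_combination hc))]
  · simp

lemma trace_phase (p q : ZMod N) (X : Matrix (ZMod N) (ZMod N) ℂ) :
    (phaseOp N (p, q) * X).trace = ∑ k, e (p * (2 * (k - q))) * X (q + q - k) k := by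
  simp only [Matrix.trace, Matrix.diag_apply, Matrix.mul_apply, phaseOp_apply, ite_mul, zero_mul]
  refine Finset.sum_congr rfl fun k _ => ?_
  rw [Finset.sum_eq_single (q + q - k)]
  · rw [if_pos (by ring)]
    congr 2; ring
  · intro b _ hb
    rw [if_neg (show ¬ (b + k = q + q) from fun hc => hb (by linear_combination hc))]
  · simp

lemma two_mul_cancel (hodd : Odd N) {a : ZMod N} (h : 2 * a = 0) : a = 0 := by
  have hc : Nat.Coprime 2 N := hodd.coprime_two_left
  have hu : IsUnit (2 : ZMod N) := by
    have := (ZMod.isUnit_iff_coprime 2 N).mpr hc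
    simpa using this
  exact hu.mul_left_cancel (by rw [h, mul_zero])

lemma sum_e_two (hodd : Odd N) (b : ZMod N) :
    ∑ a : ZMod N, e (a * (2 * b)) = if b = 0 then (N : ℂ) else 0 := by
  rw [sum_e_mul]
  by_cases h : b = 0
  · simp [h]
  · rw [if_neg h, if_neg (fun hc => h (two_mul_cancel hodd hc))]

/-- Sum of all phase-space point operators traced against `X` gives `N·tr X`. -/
lemma sum_trace_phase (hodd : Odd N) (X : Matrix (ZMod N) (ZMod N) ℂ) :
    ∑ v : ZMod N × ZMod N, (phaseOp N v * X).trace = N * X.trace := by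
  rw [Fintype.sum_prod_type]
  simp only [trace_phase]
  rw [Finset.sum_comm]
  have : ∀ q : ZMod N, ∑ p : ZMod N, ∑ k, e (p * (2 * (k - q))) * X (q + q - k) k
      = N * X q q := by
    intro q
    rw [Finset.sum_comm]
    rw [Finset.sum_eq_single q]
    · rw [← Finset.sum_mul, sum_e_two hodd, if_pos (by ring)]
      congr 2; ring
    · intro k _ hk
      rw [← Finset.sum_mul, sum_e_two hodd,
        if_neg (fun hc => hk (by linear_combination hc)), zero_mul]
    · simp
  rw [Finset.sum_congr rfl fun q _ => this q, ← Finset.mul_sum, Matrix.trace]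
  rfl

lemma sum_bij_two (hodd : Odd N) (k : ZMod N) (F : ZMod N → ℂ) :
    ∑ q : ZMod N, F (q + q - k) = ∑ i, F i := by
  apply Fintype.sum_bijective (fun q : ZMod N => q + q - k)
  · rw [Finite.injective_iff_bijective.symm]
    intro a b hab
    have : (2 : ZMod N) * (a - b) = 0 := by
      simp only at hab; linear_combination hab
    have := two_mul_cancel hodd this
    linear_combination this
  · intro q; rfl

/-- Parseval / orthogonality of the phase point operators. -/
lemma parseval (hodd : Odd N) (X : Matrix (ZMod N) (ZMod N) ℂ) :
    ∑ v : ZMod N × ZMod N, (phaseOp N v * X).trace * star ((phaseOp N v * X).trace)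
      = N * ∑ i, ∑ j, X i j * star (X i j) := by
  rw [Fintype.sum_prod_type, Finset.sum_comm]
  have key : ∀ q : ZMod N,
      ∑ p : ZMod N, (phaseOp N (p, q) * X).trace * star ((phaseOp N (p, q) * X).trace)
        = N * ∑ k, X (q + q - k) k * star (X (q + q - k) k) := by
    intro q
    have expand : ∀ p : ZMod N,
        (phaseOp N (p, q) * X).trace * star ((phaseOp N (p, q) * X).trace)
          = ∑ k, ∑ k', e (p * (2 * (k - k'))) *
              (X (q + q - k) k * star (X (q + q - k') k')) := by
      intro p
      rw [trace_phase, star_sum, Finset.sum_mul_sum]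
      refine Finset.sum_congr rfl fun k _ => Finset.sum_congr rfl fun k' _ => ?_
      rw [star_mul', star_e]
      have he : e (p * (2 * (k - k'))) = e (p * (2 * (k - q))) * e (-(p * (2 * (k' - q)))) := by
        rw [← e_add]; congr 1; ring
      rw [he]; ring
    calc ∑ p : ZMod N, (phaseOp N (p, q) * X).trace * star ((phaseOp N (p, q) * X).trace)
        = ∑ p : ZMod N, ∑ k, ∑ k', e (p * (2 * (k - k'))) *
            (X (q + q - k) k * star (X (q + q - k') k')) :=
          Finset.sum_congr rfl fun p _ => expand p
      _ = ∑ k, ∑ k', (∑ p : ZMod N, e (p * (2 * (k - k')))) *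
            (X (q + q - k) k * star (X (q + q - k') k')) := by
          rw [Finset.sum_comm]
          refine Finset.sum_congr rfl fun k _ => ?_
          rw [Finset.sum_comm]
          refine Finset.sum_congr rfl fun k' _ => ?_
          rw [Finset.sum_mul]
      _ = ∑ k, (N : ℂ) * (X (q + q - k) k * star (X (q + q - k) k)) := by
          refine Finset.sum_congr rfl fun k _ => ?_
          rw [Finset.sum_eq_single k]
          · rw [sum_e_two hodd, if_pos (sub_self k)]
          · intro k' _ hk'
            rw [sum_e_two hodd, if_neg (sub_ne_zero_of_ne (Ne.symm hk')), zero_mul]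
          · simp
      _ = N * ∑ k, X (q + q - k) k * star (X (q + q - k) k) := by rw [Finset.mul_sum]
  rw [Finset.sum_congr rfl fun q _ => key q, ← Finset.mul_sum]
  congr 1
  rw [Finset.sum_comm]
  calc ∑ k : ZMod N, ∑ q : ZMod N, X (q + q - k) k * star (X (q + q - k) k)
      = ∑ k : ZMod N, ∑ i : ZMod N, X i k * star (X i k) :=
        Finset.sum_congr rfl fun k _ => sum_bij_two hodd k (fun i => X i k * star (X i k))
    _ = ∑ i, ∑ j, X i j * star (X i j) := Finset.sum_comm

lemma marg_margInv {R : Type*} [CommRing R] (i : Fin 8) (v : R × R) :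
    marg i (margInv i v) = v := by
  fin_cases i <;> refine Prod.ext ?_ ?_ <;> simp [marg, margInv] <;> ring

end QME

/-- if the classical Margulis walk `M_N` contracts mean-zero functions by
`λ` in `ℓ²`, then the quantum Margulis channel `Λ_N(ρ) = (1/8)·Σ_T U_T ρ U_T†` contracts
traceless matrices by `λ` in Hilbert–Schmidt norm, i.e. it is an `(N,8,λ)`-quantum
expander. -/
theorem quantum_margulis_expander (N : ℕ) [NeZero N] (hN : Odd N)
    (lam : ℝ) (hlam : 0 ≤ lam)
    (U : Fin 8 → Matrix (ZMod N) (ZMod N) ℂ)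
    (hU : ∀ i, U i ∈ Matrix.unitaryGroup (ZMod N) ℂ)
    (hcov : ∀ i (v : ZMod N × ZMod N), U i * phaseOp N v * (U i)ᴴ = phaseOp N (marg i v))
    (hclass : ∀ f : ZMod N × ZMod N → ℂ, (∑ v, f v) = 0 →
      Real.sqrt (∑ v, ‖(1 / 8 : ℂ) * ∑ i : Fin 8, f (margInv i v)‖ ^ 2)
        ≤ lam * Real.sqrt (∑ v, ‖f v‖ ^ 2)) :
    ∀ X : Matrix (ZMod N) (ZMod N) ℂ, X.trace = 0 →
      hsNorm ((1 / 8 : ℂ) • ∑ i : Fin 8, U i * X * (U i)ᴴ) ≤ lam * hsNorm X := by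
  intro X hX
  have hNc : (N : ℂ) ≠ 0 := Nat.cast_ne_zero.mpr (NeZero.ne N)
  have hNr : (0 : ℝ) < (N : ℝ) := by
    exact_mod_cast Nat.pos_of_ne_zero (NeZero.ne N)
  set Y : Matrix (ZMod N) (ZMod N) ℂ := (1 / 8 : ℂ) • ∑ i : Fin 8, U i * X * (U i)ᴴ with hY
  -- the Wigner function of X
  have h0 : (∑ v : ZMod N × ZMod N, (1 / (N : ℂ)) * (phaseOp N v * X).trace) = 0 := by
    rw [← Finset.mul_sum, QME.sum_trace_phase hN, hX, mul_zero, mul_zero]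
  -- covariance of traces
  have htr : ∀ (i : Fin 8) (v : ZMod N × ZMod N),
      (phaseOp N v * (U i * X * (U i)ᴴ)).trace = (phaseOp N (margInv i v) * X).trace := by
    intro i v
    have hUu : (U i)ᴴ * U i = 1 := by
      have h := (hU i).1
      rwa [Matrix.star_eq_conjTranspose] at h
    have hA : phaseOp N v = U i * phaseOp N (margInv i v) * (U i)ᴴ := by
      rw [hcov i (margInv i v), QME.marg_margInv]
    rw [hA]
    have h2 : U i * phaseOp N (margInv i v) * (U i)ᴴ * (U i * X * (U i)ᴴ)
        = U i * (phaseOp N (margInv i v) * X) * (U i)ᴴ := by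
      simp only [Matrix.mul_assoc]
      rw [← Matrix.mul_assoc (U i)ᴴ (U i), hUu, Matrix.one_mul]
    rw [h2, Matrix.trace_mul_comm, ← Matrix.mul_assoc, ← Matrix.mul_assoc, hUu, Matrix.one_mul]
  -- the channel acts as the classical walk on Wigner functions
  have hW : ∀ v : ZMod N × ZMod N,
      (1 / 8 : ℂ) * ∑ i : Fin 8, (1 / (N : ℂ)) * (phaseOp N (margInv i v) * X).trace
        = (1 / (N : ℂ)) * (phaseOp N v * Y).trace := by
    intro v
    rw [hY, Matrix.mul_smul, Matrix.trace_smul, Matrix.mul_sum, Matrix.trace_sum]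
    rw [Finset.sum_congr rfl (fun i _ => htr i v)]
    simp only [smul_eq_mul, Finset.mul_sum]
    exact Finset.sum_congr rfl fun i _ => by ring
  -- Parseval converts phase-space ℓ² norms into HS norms
  have habs : ∀ z : ℂ, ((‖z‖ ^ 2 : ℝ) : ℂ) = z * star z := by
    intro z; rw [Complex.sq_norm, Complex.star_def, Complex.mul_conj]
  have normlem : ∀ Z : Matrix (ZMod N) (ZMod N) ℂ,
      (∑ v : ZMod N × ZMod N, ‖(1 / (N : ℂ)) * (phaseOp N v * Z).trace‖ ^ 2)
        = (1 / N : ℝ) * ∑ i, ∑ j, ‖Z i j‖ ^ 2 := by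
    intro Z
    have hstarN : star ((1 : ℂ) / N) = 1 / N := by
      simp
    apply Complex.ofReal_injective
    push_cast
    calc ∑ v : ZMod N × ZMod N,
          ((‖(1 / (N : ℂ)) * (phaseOp N v * Z).trace‖ : ℂ)) ^ 2
        = ∑ v : ZMod N × ZMod N, ((1 / (N : ℂ)) * (1 / (N : ℂ))) *
            ((phaseOp N v * Z).trace * star ((phaseOp N v * Z).trace)) := by
          refine Finset.sum_congr rfl fun v _ => ?_
          rw [show ((‖(1 / (N : ℂ)) * (phaseOp N v * Z).trace‖ : ℂ)) ^ 2
              = (((‖(1 / (N : ℂ)) * (phaseOp N v * Z).trace‖ ^ 2 : ℝ)) : ℂ) by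
            push_cast; ring]
          rw [habs, star_mul', hstarN]
          ring
      _ = ((1 / (N : ℂ)) * (1 / (N : ℂ))) *
            ∑ v : ZMod N × ZMod N,
              ((phaseOp N v * Z).trace * star ((phaseOp N v * Z).trace)) := by
          rw [Finset.mul_sum]
      _ = ((1 / (N : ℂ)) * (1 / (N : ℂ))) * ((N : ℂ) * ∑ i, ∑ j, Z i j * star (Z i j)) := by
          rw [QME.parseval hN Z]
      _ = (1 / (N : ℂ)) * ∑ i, ∑ j, Z i j * star (Z i j) := by
          field_simp
      _ = (1 / (N : ℂ)) * ∑ i, ∑ j, ((‖Z i j‖ : ℂ)) ^ 2 := by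
          congr 1
          refine Finset.sum_congr rfl fun i _ => Finset.sum_congr rfl fun j _ => ?_
          rw [show ((‖Z i j‖ : ℂ)) ^ 2
              = (((‖Z i j‖ ^ 2 : ℝ)) : ℂ) by push_cast; ring, habs]
  -- apply the classical hypothesis
  have hineq := hclass (fun v => (1 / (N : ℂ)) * (phaseOp N v * X).trace) h0
  have hLstep : ∀ v : ZMod N × ZMod N,
      ‖(1 / 8 : ℂ) * ∑ i : Fin 8,
          (1 / (N : ℂ)) * (phaseOp N (margInv i v) * X).trace‖ ^ 2
        = ‖(1 / (N : ℂ)) * (phaseOp N v * Y).trace‖ ^ 2 := by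
    intro v; rw [hW v]
  rw [Finset.sum_congr rfl (fun v _ => hLstep v), normlem Y, normlem X] at hineq
  rw [Real.sqrt_mul (by positivity), Real.sqrt_mul (by positivity)] at hineq
  have hspos : (0 : ℝ) < Real.sqrt (1 / N : ℝ) := Real.sqrt_pos.mpr (by positivity)
  rw [hsNorm, hsNorm]
  rw [mul_left_comm] at hineq
  exact le_of_mul_le_mul_left hineq hspos
end
end
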